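/- (Gerard–Sibuya, Theorem A) Any formal power series solution φ = Σ_{|k|>0} c_k x^k ∈ ℂ[[x_1,…,x_m]]^n of a Fuchsian system x_1 ∂y/∂x_1 = f_1(x,y), …, x_m ∂y/∂x_m = f_m(x,y) converges in a neighbourhood of 0 ∈ ℂ^m. -/

import Mathlib

open MvPowerSeries

noncomputable section

/-- Formal partial derivative `∂F/∂X i` of a multivariate formal power series. -/
def pder {σ : Type*} [DecidableEq σ] (i : σ) (F : MvPowerSeries σ ℂ) : MvPowerSeries σ ℂ :=
  fun e => ((e i : ℂ) + 1) * MvPowerSeries.coeff (e + Finsupp.single i 1) F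

/-- Substitution of the family `a` into `F` (meaningful when each `a s` has zero
constant term; then only finitely many terms contribute to each coefficient). -/
def msubst {σ τ : Type*} [Fintype σ] [DecidableEq σ]
    (a : σ → MvPowerSeries τ ℂ) (F : MvPowerSeries σ ℂ) : MvPowerSeries τ ℂ :=
  fun e => ∑ d ∈ Finset.Iic (Finsupp.equivFunOnFinite.symm
      (fun _ : σ => e.sum fun _ k => k)),
    MvPowerSeries.coeff d F * MvPowerSeries.coeff e (∏ s, (a s) ^ (d s))

/-- A multivariate formal power series converges (absolutely) on some polydisc
centered at the origin, hence defines a holomorphic function near `0`. -/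
def ConvNearZero {σ : Type*} (F : MvPowerSeries σ ℂ) : Prop :=
  ∃ r : ℝ, 0 < r ∧
    Summable (fun e : σ →₀ ℕ => ‖MvPowerSeries.coeff e F‖ * r ^ (e.sum fun _ k => k))

/-- `φ ∈ ℂ[[x_1,…,x_m]]^n` is a formal power series solution of the system
`x_i^{p_i} ∂y/∂x_i = f_i(x,y)`, `i = 1,…,m`, where the right-hand sides are given by
the (vectors of) power series `F i` in the `m + n` variables `(x, y)`. -/
def IsFormalSolution {m n : ℕ} (p : Fin m → ℕ)
    (F : Fin m → Fin n → MvPowerSeries (Fin m ⊕ Fin n) ℂ)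
    (φ : Fin n → MvPowerSeries (Fin m) ℂ) : Prop :=
  ∀ i k, (MvPowerSeries.X i) ^ (p i) * pder i (φ k)
      = msubst (Sum.elim MvPowerSeries.X φ) (F i k)

namespace GS
open Finsupp ENNReal NNReal
set_option linter.unusedSectionVars false

variable {σ : Type*} [DecidableEq σ]

/-- total degree of a multi-index -/
def deg (e : σ →₀ ℕ) : ℕ := e.sum fun _ k => k

lemma deg_add (u v : σ →₀ ℕ) : deg (u + v) = deg u + deg v := by
  unfold deg; exact Finsupp.sum_add_index (by simp) (by simp)

lemma deg_single (s : σ) (k : ℕ) : deg (Finsupp.single s k) = k := by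
  unfold deg; exact Finsupp.sum_single_index rfl

lemma deg_zero : deg (0 : σ →₀ ℕ) = 0 := by simp [deg]

lemma deg_eq_zero {e : σ →₀ ℕ} : deg e = 0 ↔ e = 0 := by
  unfold deg
  rw [Finsupp.sum, Finset.sum_eq_zero_iff]
  constructor
  · intro h; ext s
    by_cases hs : s ∈ e.support
    · exact h s hs
    · simpa using Finsupp.notMem_support_iff.mp hs
  · intro h; simp [h]

lemma le_deg (e : σ →₀ ℕ) (s : σ) : e s ≤ deg e := by
  by_cases hs : s ∈ e.support
  · exact Finset.single_le_sum (fun _ _ => Nat.zero_le _) hs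
  · simp [Finsupp.notMem_support_iff.mp hs]

lemma deg_fintype [Fintype σ] (e : σ →₀ ℕ) : deg e = ∑ s : σ, e s :=
  Finsupp.sum_fintype _ _ (fun _ => rfl)

/-- majorant series: coefficientwise nnnorm, in `ℝ≥0∞` -/
def maj (ψ : MvPowerSeries σ ℂ) : MvPowerSeries σ ℝ≥0∞ :=
  fun e => (‖MvPowerSeries.coeff e ψ‖₊ : ℝ≥0∞)

lemma coeff_maj (ψ : MvPowerSeries σ ℂ) (e : σ →₀ ℕ) :
    MvPowerSeries.coeff e (maj ψ) = (‖MvPowerSeries.coeff e ψ‖₊ : ℝ≥0∞) := rfl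

/-- truncated weighted norm -/
def wnK (t : ℝ≥0∞) (K : ℕ) (H : MvPowerSeries σ ℝ≥0∞) : ℝ≥0∞ :=
  ∑' e : σ →₀ ℕ, if deg e ≤ K then MvPowerSeries.coeff e H * t ^ deg e else 0

/-- vanishing below degree r -/
def Vb (r : ℕ) (H : MvPowerSeries σ ℝ≥0∞) : Prop :=
  ∀ e : σ →₀ ℕ, deg e < r → MvPowerSeries.coeff e H = 0

lemma wnK_mono_coeff {t : ℝ≥0∞} {K : ℕ} {H H' : MvPowerSeries σ ℝ≥0∞}
    (h : ∀ e, MvPowerSeries.coeff e H ≤ MvPowerSeries.coeff e H') :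
    wnK t K H ≤ wnK t K H' := by
  refine ENNReal.tsum_le_tsum fun e => ?_
  split
  · exact mul_le_mul_left (h e) _
  · exact le_rfl

lemma wnK_mono_K {t : ℝ≥0∞} {K K' : ℕ} (hK : K ≤ K') (H : MvPowerSeries σ ℝ≥0∞) :
    wnK t K H ≤ wnK t K' H := by
  refine ENNReal.tsum_le_tsum fun e => ?_
  by_cases h : deg e ≤ K
  · rw [if_pos h, if_pos (le_trans h hK)]
  · rw [if_neg h]; exact (zero_le)

lemma tsum_antidiagonal (g : (σ →₀ ℕ) → (σ →₀ ℕ) → ℝ≥0∞) :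
    (∑' e : σ →₀ ℕ, ∑ p ∈ Finset.HasAntidiagonal.antidiagonal e, g p.1 p.2)
      = ∑' p : (σ →₀ ℕ) × (σ →₀ ℕ), g p.1 p.2 := by
  have h1 : ∀ e : σ →₀ ℕ, ∑ p ∈ Finset.HasAntidiagonal.antidiagonal e, g p.1 p.2
      = ∑' p : (σ →₀ ℕ) × (σ →₀ ℕ), if p.1 + p.2 = e then g p.1 p.2 else 0 := by
    intro e
    rw [tsum_eq_sum (s := Finset.HasAntidiagonal.antidiagonal e)]
    · exact Finset.sum_congr rfl fun p hp => by
        rw [if_pos (Finset.HasAntidiagonal.mem_antidiagonal.mp hp)]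
    · intro p hp
      rw [if_neg fun h => hp (Finset.HasAntidiagonal.mem_antidiagonal.mpr h)]
  calc (∑' e : σ →₀ ℕ, ∑ p ∈ Finset.HasAntidiagonal.antidiagonal e, g p.1 p.2)
      = ∑' (e : σ →₀ ℕ) (p : (σ →₀ ℕ) × (σ →₀ ℕ)),
          if p.1 + p.2 = e then g p.1 p.2 else 0 := by
        exact tsum_congr h1
    _ = ∑' (p : (σ →₀ ℕ) × (σ →₀ ℕ)) (e : σ →₀ ℕ),
          if p.1 + p.2 = e then g p.1 p.2 else 0 := ENNReal.tsum_comm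
    _ = ∑' p : (σ →₀ ℕ) × (σ →₀ ℕ), g p.1 p.2 := by
        refine tsum_congr fun p => ?_
        simp only [eq_comm (a := p.1 + p.2)]
        exact tsum_ite_eq _ _

lemma wnK_mul {t : ℝ≥0∞} {K rψ rχ : ℕ} {ψ χ : MvPowerSeries σ ℝ≥0∞}
    (hψ : Vb rψ ψ) (hχ : Vb rχ χ) :
    wnK t K (ψ * χ) ≤ wnK t (K - rχ) ψ * wnK t (K - rψ) χ := by
  have step1 : wnK t K (ψ * χ)
      = ∑' p : (σ →₀ ℕ) × (σ →₀ ℕ),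
          (if deg (p.1 + p.2) ≤ K then
            MvPowerSeries.coeff p.1 ψ * MvPowerSeries.coeff p.2 χ
              * t ^ deg (p.1 + p.2) else 0) := by
    rw [← tsum_antidiagonal fun u v => (if deg (u + v) ≤ K then
            MvPowerSeries.coeff u ψ * MvPowerSeries.coeff v χ
              * t ^ deg (u + v) else 0)]
    refine tsum_congr fun e => ?_
    rw [MvPowerSeries.coeff_mul]
    rw [show (if deg e ≤ K then (∑ p ∈ Finset.HasAntidiagonal.antidiagonal e,
        MvPowerSeries.coeff p.1 ψ * MvPowerSeries.coeff p.2 χ) * t ^ deg e else 0)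
      = ∑ p ∈ Finset.HasAntidiagonal.antidiagonal e, (if deg e ≤ K then
          MvPowerSeries.coeff p.1 ψ * MvPowerSeries.coeff p.2 χ * t ^ deg e else 0)
      from by split <;> simp [Finset.sum_mul]]
    refine Finset.sum_congr rfl fun p hp => ?_
    rw [Finset.HasAntidiagonal.mem_antidiagonal.mp hp]
  rw [step1]
  have step2 : ∀ p : (σ →₀ ℕ) × (σ →₀ ℕ),
      (if deg (p.1 + p.2) ≤ K then
          MvPowerSeries.coeff p.1 ψ * MvPowerSeries.coeff p.2 χ
            * t ^ deg (p.1 + p.2) else 0)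
      ≤ (if deg p.1 ≤ K - rχ then MvPowerSeries.coeff p.1 ψ * t ^ deg p.1 else 0)
        * (if deg p.2 ≤ K - rψ then MvPowerSeries.coeff p.2 χ * t ^ deg p.2 else 0) := by
    rintro ⟨u, v⟩
    by_cases hu : MvPowerSeries.coeff u ψ = 0
    · simp [hu]
    by_cases hv : MvPowerSeries.coeff v χ = 0
    · simp [hv]
    have hdu : rψ ≤ deg u := by
      by_contra h; exact hu (hψ u (by omega))
    have hdv : rχ ≤ deg v := by
      by_contra h; exact hv (hχ v (by omega))
    by_cases hK : deg ((u,v).1 + (u,v).2) ≤ K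
    · rw [if_pos hK]
      rw [deg_add] at hK
      rw [if_pos (show deg (u,v).1 ≤ K - rχ by simp at hK ⊢; omega),
        if_pos (show deg (u,v).2 ≤ K - rψ by simp at hK ⊢; omega)]
      refine le_of_eq ?_
      show _ * _ * t ^ deg (u + v) = _
      rw [deg_add, pow_add]; ring
    · rw [if_neg hK]; exact (zero_le)
  calc _ ≤ ∑' p : (σ →₀ ℕ) × (σ →₀ ℕ),
        (if deg p.1 ≤ K - rχ then MvPowerSeries.coeff p.1 ψ * t ^ deg p.1 else 0)
        * (if deg p.2 ≤ K - rψ then MvPowerSeries.coeff p.2 χ * t ^ deg p.2 else 0) :=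
      ENNReal.tsum_le_tsum step2
    _ = _ := by
      rw [ENNReal.tsum_prod (f := fun u v =>
        (if deg u ≤ K - rχ then MvPowerSeries.coeff u ψ * t ^ deg u else 0)
        * (if deg v ≤ K - rψ then MvPowerSeries.coeff v χ * t ^ deg v else 0))]
      unfold wnK
      calc (∑' (u : σ →₀ ℕ) (v : σ →₀ ℕ),
            (if deg u ≤ K - rχ then MvPowerSeries.coeff u ψ * t ^ deg u else 0)
            * (if deg v ≤ K - rψ then MvPowerSeries.coeff v χ * t ^ deg v else 0))
          = ∑' (u : σ →₀ ℕ), (if deg u ≤ K - rχ then MvPowerSeries.coeff u ψ * t ^ deg u else 0)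
            * ∑' (v : σ →₀ ℕ), (if deg v ≤ K - rψ then MvPowerSeries.coeff v χ * t ^ deg v else 0) :=
          tsum_congr fun u => ENNReal.tsum_mul_left
        _ = _ := ENNReal.tsum_mul_right


lemma coeff_mul_mono {H H' G G' : MvPowerSeries σ ℝ≥0∞}
    (h1 : ∀ e, MvPowerSeries.coeff e H ≤ MvPowerSeries.coeff e H')
    (h2 : ∀ e, MvPowerSeries.coeff e G ≤ MvPowerSeries.coeff e G') :
    ∀ e, MvPowerSeries.coeff e (H * G) ≤ MvPowerSeries.coeff e (H' * G') := by
  intro e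
  rw [MvPowerSeries.coeff_mul, MvPowerSeries.coeff_mul]
  exact Finset.sum_le_sum fun p _ => mul_le_mul' (h1 p.1) (h2 p.2)

lemma Vb_mul {r1 r2 : ℕ} {H G : MvPowerSeries σ ℝ≥0∞} (h1 : Vb r1 H) (h2 : Vb r2 G) :
    Vb (r1 + r2) (H * G) := by
  intro e he
  rw [MvPowerSeries.coeff_mul]
  refine Finset.sum_eq_zero fun p hp => ?_
  have hsum : deg p.1 + deg p.2 = deg e := by
    rw [← deg_add, Finset.HasAntidiagonal.mem_antidiagonal.mp hp]
  rcases Nat.lt_or_ge (deg p.1) r1 with h | h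
  · rw [h1 p.1 h, zero_mul]
  · rw [h2 p.2 (by omega), mul_zero]

lemma Vb_pow {r : ℕ} {H : MvPowerSeries σ ℝ≥0∞} (h : Vb r H) (k : ℕ) :
    Vb (k * r) (H ^ k) := by
  induction k with
  | zero => exact fun e he => absurd he (by simp)
  | succ k ih =>
      rw [pow_succ]
      have := Vb_mul ih h
      rwa [show k * r + r = (k+1) * r by ring] at this

lemma maj_one : ∀ e, MvPowerSeries.coeff e (maj (1 : MvPowerSeries σ ℂ))
    = MvPowerSeries.coeff e 1 := by
  intro e
  classical
  show ((‖MvPowerSeries.coeff e 1‖₊ : ℝ≥0∞)) = _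
  rw [MvPowerSeries.coeff_one, MvPowerSeries.coeff_one]
  split <;> simp

lemma maj_mul (ψ χ : MvPowerSeries σ ℂ) :
    ∀ e, MvPowerSeries.coeff e (maj (ψ * χ))
      ≤ MvPowerSeries.coeff e (maj ψ * maj χ) := by
  intro e
  classical
  show ((‖MvPowerSeries.coeff e (ψ * χ)‖₊ : ℝ≥0∞)) ≤ _
  rw [MvPowerSeries.coeff_mul, MvPowerSeries.coeff_mul]
  have h1 : ‖∑ p ∈ Finset.HasAntidiagonal.antidiagonal e, MvPowerSeries.coeff p.1 ψ * MvPowerSeries.coeff p.2 χ‖₊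
      ≤ ∑ p ∈ Finset.HasAntidiagonal.antidiagonal e, ‖MvPowerSeries.coeff p.1 ψ‖₊ * ‖MvPowerSeries.coeff p.2 χ‖₊ :=
    (nnnorm_sum_le _ _).trans (le_of_eq (Finset.sum_congr rfl fun p _ => nnnorm_mul _ _))
  calc ((‖∑ p ∈ Finset.HasAntidiagonal.antidiagonal e, MvPowerSeries.coeff p.1 ψ * MvPowerSeries.coeff p.2 χ‖₊ : ℝ≥0∞))
      ≤ ((∑ p ∈ Finset.HasAntidiagonal.antidiagonal e, ‖MvPowerSeries.coeff p.1 ψ‖₊ * ‖MvPowerSeries.coeff p.2 χ‖₊ : ℝ≥0) : ℝ≥0∞) :=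
        ENNReal.coe_le_coe.mpr h1
    _ = ∑ p ∈ Finset.HasAntidiagonal.antidiagonal e, ((‖MvPowerSeries.coeff p.1 ψ‖₊ : ℝ≥0∞) * (‖MvPowerSeries.coeff p.2 χ‖₊ : ℝ≥0∞)) := by
        push_cast
        rfl
    _ = _ := rfl

lemma maj_pow (ψ : MvPowerSeries σ ℂ) (k : ℕ) :
    ∀ e, MvPowerSeries.coeff e (maj (ψ ^ k))
      ≤ MvPowerSeries.coeff e ((maj ψ) ^ k) := by
  induction k with
  | zero => intro e; rw [pow_zero, pow_zero]; exact le_of_eq (maj_one e)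
  | succ k ih =>
      intro e
      rw [pow_succ, pow_succ]
      exact le_trans (maj_mul _ _ e) (coeff_mul_mono ih (fun _ => le_rfl) e)

section prodpow
variable {τ : Type*} [Fintype τ] [DecidableEq τ]

lemma prodpow_split {M : Type*} [CommMonoid M] (c : τ → M) (s0 : τ) (k : ℕ) (f : τ →₀ ℕ) :
    (∏ s, c s ^ ((Finsupp.single s0 k + f) s)) = c s0 ^ k * ∏ s, c s ^ f s := by
  have : ∀ s, c s ^ ((Finsupp.single s0 k + f) s) = c s ^ (Finsupp.single s0 k) s * c s ^ f s := by
    intro s; rw [Finsupp.add_apply, pow_add]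
  rw [Finset.prod_congr rfl fun s _ => this s, Finset.prod_mul_distrib]
  congr 1
  rw [Finset.prod_eq_single s0]
  · rw [Finsupp.single_eq_same]
  · intro s _ hs; rw [Finsupp.single_eq_of_ne hs, pow_zero]
  · intro h; exact absurd (Finset.mem_univ s0) h

lemma prodpow_single {M : Type*} [CommMonoid M] (c : τ → M) (s0 : τ) (k : ℕ) :
    (∏ s, c s ^ (Finsupp.single s0 k) s) = c s0 ^ k := by
  have := prodpow_split c s0 k 0
  simpa using this

lemma maj_prodpow (a : τ → MvPowerSeries σ ℂ) (d : τ →₀ ℕ) :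
    ∀ e, MvPowerSeries.coeff e (maj (∏ s, (a s) ^ d s))
      ≤ MvPowerSeries.coeff e (∏ s, (maj (a s)) ^ d s) := by
  induction d using Finsupp.induction with
  | zero => intro e; simp only [Finsupp.coe_zero, Pi.zero_apply, pow_zero, Finset.prod_const_one]
            exact le_of_eq (maj_one e)
  | single_add s0 k f hs0 hk ih =>
      intro e
      rw [prodpow_split (fun s => a s) s0 k f, prodpow_split (fun s => maj (a s)) s0 k f]
      exact le_trans (maj_mul _ _ e) (coeff_mul_mono (maj_pow _ _) ih e)

lemma Vb_prodpow (c : τ → MvPowerSeries σ ℝ≥0∞) (h : ∀ s, Vb 1 (c s)) (d : τ →₀ ℕ) :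
    Vb (deg d) (∏ s, (c s) ^ d s) := by
  induction d using Finsupp.induction with
  | zero => exact fun e he => absurd he (by rw [deg_zero]; omega)
  | single_add s0 k f hs0 hk ih =>
      rw [prodpow_split c s0 k f]
      have h2 := Vb_mul (Vb_pow (h s0) k) ih
      rwa [show k * 1 + deg f = deg (Finsupp.single s0 k + f) by
        rw [deg_add, deg_single]; ring] at h2

lemma wnK_pow {t : ℝ≥0∞} {K : ℕ} {c : MvPowerSeries σ ℝ≥0∞} (h : Vb 1 c) (k : ℕ) (hk : 1 ≤ k) :
    wnK t K (c ^ k) ≤ (wnK t (K - (k - 1)) c) ^ k := by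
  induction k generalizing K with
  | zero => omega
  | succ k ih =>
      rcases Nat.eq_zero_or_pos k with hk0 | hk0
      · subst hk0; simpa using le_rfl
      · rw [pow_succ]
        have h1 : wnK t K (c ^ k * c) ≤ wnK t (K - 1) (c ^ k) * wnK t (K - k) c := by
          have := wnK_mul (t := t) (K := K) (Vb_pow h k) h
          rwa [show k * 1 = k by ring] at this
        refine le_trans h1 ?_
        have h2 : wnK t (K - 1) (c ^ k) ≤ (wnK t (K - 1 - (k - 1)) c) ^ k := ih hk0
        have h3 : K - 1 - (k - 1) = K - k := by omega
        rw [h3] at h2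
        calc wnK t (K - 1) (c ^ k) * wnK t (K - k) c
            ≤ (wnK t (K - k) c) ^ k * wnK t (K - k) c := mul_le_mul_left h2 _
          _ = (wnK t (K - k) c) ^ (k + 1) := (pow_succ _ _).symm
          _ = (wnK t (K - (k + 1 - 1)) c) ^ (k + 1) := by norm_num

lemma wnK_prodpow {t : ℝ≥0∞} (c : τ → MvPowerSeries σ ℝ≥0∞) (h : ∀ s, Vb 1 (c s))
    (d : τ →₀ ℕ) (hd : 1 ≤ deg d) (K : ℕ) :
    wnK t K (∏ s, (c s) ^ d s) ≤ ∏ s, (wnK t (K - (deg d - 1)) (c s)) ^ d s := by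
  induction d using Finsupp.induction generalizing K with
  | zero => exact absurd hd (by rw [deg_zero]; omega)
  | single_add s0 k f hs0 hk ih =>
      have hdeg : deg (Finsupp.single s0 k + f) = k + deg f := by
        rw [deg_add, deg_single]
      rw [prodpow_split c s0 k f, prodpow_split (fun s => wnK t (K - (deg (Finsupp.single s0 k + f) - 1)) (c s)) s0 k f]
      rcases Nat.eq_zero_or_pos (deg f) with hf0 | hf0
      · have hf : f = 0 := deg_eq_zero.mp hf0
        subst hf
        simp only [Finsupp.coe_zero, Pi.zero_apply, pow_zero, Finset.prod_const_one, mul_one]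
        have := wnK_pow (t := t) (K := K) (h s0) k (by omega)
        rwa [show K - (deg (Finsupp.single s0 k + 0) - 1) = K - (k-1) by rw [hdeg]; omega]
      · have h1 : wnK t K (c s0 ^ k * ∏ s, c s ^ f s)
            ≤ wnK t (K - deg f) (c s0 ^ k) * wnK t (K - k) (∏ s, c s ^ f s) := by
          have := wnK_mul (t := t) (K := K) (Vb_pow (h s0) k) (Vb_prodpow c h f)
          rwa [show k * 1 = k by ring] at this
        refine le_trans h1 ?_
        have h2 : wnK t (K - deg f) (c s0 ^ k) ≤ (wnK t (K - deg f - (k - 1)) (c s0)) ^ k :=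
          wnK_pow (h s0) k (by omega)
        have h3 : wnK t (K - k) (∏ s, c s ^ f s)
            ≤ ∏ s, (wnK t (K - k - (deg f - 1)) (c s)) ^ f s := ih hf0 (K - k)
        have e1 : K - deg f - (k - 1) = K - (deg (Finsupp.single s0 k + f) - 1) := by
          rw [hdeg]; omega
        have e2 : K - k - (deg f - 1) = K - (deg (Finsupp.single s0 k + f) - 1) := by
          rw [hdeg]; omega
        rw [e1] at h2; rw [e2] at h3
        exact mul_le_mul' h2 h3

end prodpow

lemma Vb_one_maj {ψ : MvPowerSeries σ ℂ} (h : MvPowerSeries.constantCoeff ψ = 0) :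
    Vb 1 (maj ψ) := by
  intro e he
  have : e = 0 := deg_eq_zero.mp (by omega)
  subst this
  show ((‖MvPowerSeries.coeff 0 ψ‖₊ : ℝ≥0∞)) = 0
  rw [MvPowerSeries.coeff_zero_eq_constantCoeff, h]
  simp

lemma Vb_one_maj_X (i : σ) : Vb 1 (maj (MvPowerSeries.X (R := ℂ) i)) :=
  Vb_one_maj (MvPowerSeries.constantCoeff_X i)

lemma wnK_maj_X (i : σ) {t : ℝ≥0∞} {K : ℕ} :
    wnK t K (maj (MvPowerSeries.X (R := ℂ) i)) ≤ t := by
  classical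
  have : ∀ e : σ →₀ ℕ,
      (if deg e ≤ K then MvPowerSeries.coeff e (maj (MvPowerSeries.X (R := ℂ) i)) * t ^ deg e else 0)
      ≤ (if e = Finsupp.single i 1 then t else 0) := by
    intro e
    by_cases he : e = Finsupp.single i 1
    · subst he
      rw [if_pos rfl]
      split
      · show ((‖MvPowerSeries.coeff _ _‖₊ : ℝ≥0∞)) * _ ≤ _
        rw [MvPowerSeries.coeff_X, if_pos rfl, deg_single]
        simp
      · exact (zero_le)
    · rw [if_neg he]
      split
      · show ((‖MvPowerSeries.coeff _ _‖₊ : ℝ≥0∞)) * _ ≤ _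
        rw [MvPowerSeries.coeff_X, if_neg he]
        simp
      · exact le_rfl
  calc wnK t K (maj (MvPowerSeries.X (R := ℂ) i))
      ≤ ∑' e : σ →₀ ℕ, (if e = Finsupp.single i 1 then t else 0) := ENNReal.tsum_le_tsum this
    _ = t := tsum_ite_eq _ _


lemma eq_single_of_deg_eq_one {σ : Type*} [Fintype σ] [DecidableEq σ]
    {d : σ →₀ ℕ} (h : deg d = 1) : ∃ s0, d = Finsupp.single s0 1 := by
  have hsum : ∑ s : σ, d s = 1 := by rw [← deg_fintype]; exact h
  have hne : ∑ s : σ, d s ≠ 0 := by omega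
  obtain ⟨s0, -, hs0⟩ := Finset.exists_ne_zero_of_sum_ne_zero hne
  have h1 : d s0 = 1 := by
    have := le_deg d s0
    omega
  refine ⟨s0, ?_⟩
  ext s
  rcases eq_or_ne s s0 with rfl | hs
  · rw [Finsupp.single_eq_same, h1]
  · rw [Finsupp.single_eq_of_ne hs]
    have hsplit : d s0 + ∑ x ∈ Finset.univ.erase s0, d x = ∑ s : σ, d s :=
      Finset.add_sum_erase Finset.univ (fun s => d s) (Finset.mem_univ s0)
    have hz : ∑ x ∈ Finset.univ.erase s0, d x = 0 := by omega
    have := (Finset.sum_eq_zero_iff).mp hz s (by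
      rw [Finset.mem_erase]; exact ⟨hs, Finset.mem_univ s⟩)
    exact this

lemma wnK_maj_ne_top [Fintype σ] {t : ℝ≥0∞} (ht : t ≠ ⊤) (K : ℕ) (ψ : MvPowerSeries σ ℂ) :
    wnK t K (maj ψ) ≠ ⊤ := by
  unfold wnK
  rw [tsum_eq_sum (s := Finset.Iic (Finsupp.equivFunOnFinite.symm (fun _ : σ => K)))
    (fun e he => by
      rw [if_neg]
      intro hdeg
      refine he ?_
      rw [Finset.mem_Iic, Finsupp.le_def]
      intro s
      exact le_trans (le_deg e s) hdeg)]
  refine ne_of_lt (ENNReal.sum_lt_top.mpr fun e _ => ?_)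
  split
  · exact ENNReal.mul_lt_top ENNReal.coe_lt_top (ENNReal.pow_lt_top ht.lt_top)
  · simp

lemma wnK_le_mul_of_vb1 {t : ℝ≥0∞} (ht : t ≤ 1) {H : MvPowerSeries σ ℝ≥0∞}
    (h : Vb 1 H) (K : ℕ) : wnK t K H ≤ t * wnK 1 K H := by
  unfold wnK
  rw [← ENNReal.tsum_mul_left]
  refine ENNReal.tsum_le_tsum fun e => ?_
  by_cases hK : deg e ≤ K
  · rw [if_pos hK, if_pos hK]
    rcases Nat.eq_zero_or_pos (deg e) with h0 | h0
    · rw [h (e := e) (by omega)]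
      simp
    · have : t ^ deg e ≤ t * 1 ^ deg e := by
        rw [one_pow, mul_one]
        calc t ^ deg e ≤ t ^ 1 := pow_le_pow_right_of_le_one' ht (by omega)
          _ = t := pow_one t
      calc MvPowerSeries.coeff e H * t ^ deg e
          ≤ MvPowerSeries.coeff e H * (t * 1 ^ deg e) := mul_le_mul_right this _
        _ = t * (MvPowerSeries.coeff e H * 1 ^ deg e) := by ring
  · rw [if_neg hK, if_neg hK, mul_zero]

section main
variable {m n : ℕ}
  (F : Fin m → Fin n → MvPowerSeries (Fin m ⊕ Fin n) ℂ)
  (φ : Fin n → MvPowerSeries (Fin m) ℂ)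

/-- the finset of resonant indices -/
def Res (m n : ℕ) : Finset ((Fin m ⊕ Fin n) →₀ ℕ) :=
  Finset.image (fun j' : Fin n => Finsupp.single (Sum.inr j') 1) Finset.univ

def IicBd (m n : ℕ) (e : Fin m →₀ ℕ) : Finset ((Fin m ⊕ Fin n) →₀ ℕ) :=
  Finset.Iic (Finsupp.equivFunOnFinite.symm (fun _ : Fin m ⊕ Fin n => deg e))

lemma Res_subset_Iic (e : Fin m →₀ ℕ) (h1 : 1 ≤ deg e) : Res m n ⊆ IicBd m n e := by
  intro d hd
  rw [Res, Finset.mem_image] at hd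
  obtain ⟨j', -, rfl⟩ := hd
  rw [IicBd, Finset.mem_Iic, Finsupp.le_def]
  intro s
  show _ ≤ (Finsupp.equivFunOnFinite.symm fun _ : Fin m ⊕ Fin n => deg e) s
  have hs : (Finsupp.equivFunOnFinite.symm fun _ : Fin m ⊕ Fin n => deg e) s = deg e := rfl
  rw [hs]
  rcases eq_or_ne s (Sum.inr j') with h | h
  · rw [h, Finsupp.single_eq_same]; exact h1
  · rw [Finsupp.single_eq_of_ne h]; exact Nat.zero_le _

lemma coeff_rec
    (hsol : ∀ i k, (MvPowerSeries.X i) ^ (1:ℕ) * pder i (φ k)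
      = msubst (Sum.elim MvPowerSeries.X φ) (F i k))
    (i : Fin m) (j : Fin n) (e : Fin m →₀ ℕ) :
    (e i : ℂ) * MvPowerSeries.coeff e (φ j)
      = ∑ d ∈ IicBd m n e, MvPowerSeries.coeff d (F i j) *
          MvPowerSeries.coeff e (∏ s, (Sum.elim MvPowerSeries.X φ s) ^ (d s)) := by
  have h := congrArg (fun G => MvPowerSeries.coeff e G) (hsol i j)
  rw [show MvPowerSeries.coeff e (msubst (Sum.elim MvPowerSeries.X φ) (F i j))
    = ∑ d ∈ IicBd m n e, MvPowerSeries.coeff d (F i j) *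
        MvPowerSeries.coeff e (∏ s, (Sum.elim MvPowerSeries.X φ s) ^ (d s)) from by
      rw [MvPowerSeries.coeff_apply]; rfl] at h
  rw [← h, pow_one, MvPowerSeries.X_def, MvPowerSeries.coeff_monomial_mul]
  by_cases hle : Finsupp.single i 1 ≤ e
  · rw [if_pos hle]
    have h1 : 1 ≤ e i := by
      have := Finsupp.le_def.mp hle i
      simpa using this
    have h2 : (e - Finsupp.single i 1) + Finsupp.single i 1 = e :=
      tsub_add_cancel_of_le hle
    have h3 : ((e - Finsupp.single i 1 : Fin m →₀ ℕ)) i = e i - 1 := by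
      have := Finsupp.tsub_apply e (Finsupp.single i 1) i
      rw [Finsupp.single_eq_same] at this
      exact this
    rw [show MvPowerSeries.coeff (e - Finsupp.single i 1) (pder i (φ j))
      = ((((e - Finsupp.single i 1) : Fin m →₀ ℕ) i : ℂ) + 1) *
          MvPowerSeries.coeff ((e - Finsupp.single i 1) + Finsupp.single i 1) (φ j) from by
      rw [MvPowerSeries.coeff_apply]; rfl]
    rw [h2, h3, one_mul]
    congr 1
    push_cast [Nat.cast_sub h1]
    ring
  · rw [if_neg hle]
    have h1 : e i = 0 := by
      by_contra h
      exact hle (by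
        rw [Finsupp.single_le_iff]
        omega)
    rw [h1]
    simp

/-- matrix of the linear-in-y part -/
def Amat (i : Fin m) (j j' : Fin n) : ℂ :=
  MvPowerSeries.coeff (Finsupp.single (Sum.inr j') 1) (F i j)

/-- per-coefficient estimate for each i, j -/
lemma key_norm
    (hsol : ∀ i k, (MvPowerSeries.X i) ^ (1:ℕ) * pder i (φ k)
      = msubst (Sum.elim MvPowerSeries.X φ) (F i k))
    (i : Fin m) (j : Fin n) (e : Fin m →₀ ℕ) (h1 : 1 ≤ deg e) :
    (e i : ℝ) * ‖MvPowerSeries.coeff e (φ j)‖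
      ≤ (∑ j', ‖Amat F i j j'‖ * ‖MvPowerSeries.coeff e (φ j')‖)
        + ∑ d ∈ IicBd m n e \ Res m n,
          ‖MvPowerSeries.coeff d (F i j)‖ *
            ‖MvPowerSeries.coeff e (∏ s, (Sum.elim MvPowerSeries.X φ s) ^ (d s))‖ := by
  have hsplit :
      (e i : ℂ) * MvPowerSeries.coeff e (φ j)
        - ∑ j', Amat F i j j' * MvPowerSeries.coeff e (φ j')
      = ∑ d ∈ IicBd m n e \ Res m n, MvPowerSeries.coeff d (F i j) *
          MvPowerSeries.coeff e (∏ s, (Sum.elim MvPowerSeries.X φ s) ^ (d s)) := by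
    have hrec := coeff_rec F φ hsol i j e
    have hsub := Finset.sum_sdiff (f := fun d => MvPowerSeries.coeff d (F i j) *
        MvPowerSeries.coeff e (∏ s, (Sum.elim MvPowerSeries.X φ s) ^ (d s)))
      (Res_subset_Iic e h1)
    have hres : ∑ d ∈ Res m n, MvPowerSeries.coeff d (F i j) *
        MvPowerSeries.coeff e (∏ s, (Sum.elim MvPowerSeries.X φ s) ^ (d s))
        = ∑ j', Amat F i j j' * MvPowerSeries.coeff e (φ j') := by
      rw [Res, Finset.sum_image (by
        intro x _ y _ hxy
        have := Finsupp.single_left_injective (α := Fin m ⊕ Fin n) (one_ne_zero) hxy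
        exact Sum.inr.inj this)]
      refine Finset.sum_congr rfl fun j' _ => ?_
      congr 1
      rw [prodpow_single (Sum.elim MvPowerSeries.X φ) (Sum.inr j') 1, pow_one, Sum.elim_inr]
    rw [hrec, ← hsub, hres]
    ring
  have h3 : ‖(e i : ℂ) * MvPowerSeries.coeff e (φ j)
      - ∑ j', Amat F i j j' * MvPowerSeries.coeff e (φ j')‖
      ≤ ∑ d ∈ IicBd m n e \ Res m n,
        ‖MvPowerSeries.coeff d (F i j)‖ *
          ‖MvPowerSeries.coeff e (∏ s, (Sum.elim MvPowerSeries.X φ s) ^ (d s))‖ := by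
    rw [hsplit]
    exact (norm_sum_le _ _).trans (le_of_eq (Finset.sum_congr rfl fun d _ => norm_mul _ _))
  have h4 := norm_sub_norm_le ((e i : ℂ) * MvPowerSeries.coeff e (φ j))
      (∑ j', Amat F i j j' * MvPowerSeries.coeff e (φ j'))
  have h5 : ‖∑ j', Amat F i j j' * MvPowerSeries.coeff e (φ j')‖
      ≤ ∑ j', ‖Amat F i j j'‖ * ‖MvPowerSeries.coeff e (φ j')‖ :=
    (norm_sum_le _ _).trans (le_of_eq (Finset.sum_congr rfl fun j' _ => norm_mul _ _))
  have h6 : ‖(e i : ℂ) * MvPowerSeries.coeff e (φ j)‖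
      = (e i : ℝ) * ‖MvPowerSeries.coeff e (φ j)‖ := by
    rw [norm_mul]
    congr 1
    simp
  linarith

/-- abstract arithmetic lemma over ℝ -/
lemma key_arith (m n : ℕ) (hm : 1 ≤ m) (E : Fin m → ℕ) (D : ℕ)
    (A : Fin m → Fin n → Fin n → ℝ) (hA : ∀ i j j', 0 ≤ A i j j')
    (c : Fin n → ℝ) (hc : ∀ j, 0 ≤ c j)
    (R : Fin m → Fin n → ℝ) (hR : ∀ i j, 0 ≤ R i j)
    (hDsum : D = ∑ i, E i)
    (hkey : ∀ i j, (E i : ℝ) * c j ≤ (∑ j', A i j j' * c j') + R i j)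
    (he : 2 * (∑ i, ∑ j, ∑ j', A i j j') * m ≤ (D : ℝ)) :
    (D : ℝ) * (∑ j, c j) ≤ 2 * m * ∑ i, ∑ j, R i j := by
  set a : ℝ := ∑ i, ∑ j, ∑ j', A i j j' with ha
  set v : ℝ := ∑ j, c j with hv
  obtain ⟨i, -, hi⟩ := Finset.exists_max_image Finset.univ E ⟨⟨0, hm⟩, Finset.mem_univ _⟩
  have hdegi : D ≤ m * E i := by
    rw [hDsum]
    calc ∑ s, E s ≤ ∑ _s : Fin m, E i :=
          Finset.sum_le_sum fun s _ => hi s (Finset.mem_univ s)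
      _ = m * E i := by rw [Finset.sum_const, Finset.card_univ, Fintype.card_fin, smul_eq_mul]
  have hAv : ∑ j, ∑ j', A i j j' * c j' ≤ a * v := by
    rw [Finset.sum_comm, hv, Finset.mul_sum]
    refine Finset.sum_le_sum fun j' _ => ?_
    rw [← Finset.sum_mul]
    refine mul_le_mul_of_nonneg_right ?_ (hc j')
    calc ∑ j, A i j j' ≤ ∑ j, ∑ j'', A i j j'' :=
          Finset.sum_le_sum fun j _ => Finset.single_le_sum
            (f := fun j'' => A i j j'') (fun _ _ => hA _ _ _) (Finset.mem_univ j')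
      _ ≤ a :=
          Finset.single_le_sum (f := fun i' => ∑ j, ∑ j'', A i' j j'')
            (fun i' _ => Finset.sum_nonneg fun _ _ => Finset.sum_nonneg fun _ _ => hA _ _ _)
            (Finset.mem_univ i)
  have hsumj : (E i : ℝ) * v ≤ a * v + ∑ j, R i j := by
    calc (E i : ℝ) * v = ∑ j, (E i : ℝ) * c j := by rw [hv, Finset.mul_sum]
      _ ≤ ∑ j, ((∑ j', A i j j' * c j') + R i j) := Finset.sum_le_sum fun j _ => hkey i j
      _ = (∑ j, ∑ j', A i j j' * c j') + ∑ j, R i j := Finset.sum_add_distrib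
      _ ≤ a * v + ∑ j, R i j := add_le_add hAv le_rfl
  have hRle : ∑ j, R i j ≤ ∑ i', ∑ j, R i' j :=
    Finset.single_le_sum (f := fun i' => ∑ j, R i' j)
      (fun i' _ => Finset.sum_nonneg fun _ _ => hR _ _) (Finset.mem_univ i)
  have hvnonneg : 0 ≤ v := Finset.sum_nonneg fun _ _ => hc _
  have hanonneg : 0 ≤ a :=
    Finset.sum_nonneg fun _ _ => Finset.sum_nonneg fun _ _ => Finset.sum_nonneg fun _ _ => hA _ _ _
  have hei : (D : ℝ) ≤ (m : ℝ) * (E i : ℝ) := by exact_mod_cast hdegi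
  have hRnn : 0 ≤ ∑ j, R i j := Finset.sum_nonneg fun _ _ => hR _ _
  have hm' : (1 : ℝ) ≤ (m : ℝ) := by exact_mod_cast hm
  -- D * v ≤ 2 m (E i - a) v ≤ 2 m (Σ_j R i j)
  have step : (D : ℝ) * v ≤ 2 * m * ((E i : ℝ) * v - a * v) := by
    nlinarith [mul_le_mul_of_nonneg_right hei hvnonneg, he, hvnonneg]
  have step2 : (D : ℝ) * v ≤ 2 * m * (∑ j, R i j) := by
    nlinarith [step, hsumj, hm']
  calc (D : ℝ) * v ≤ 2 * m * (∑ j, R i j) := step2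
    _ ≤ 2 * m * ∑ i', ∑ j, R i' j := by
        refine mul_le_mul_of_nonneg_left hRle (by positivity)

end main

end GS

open GS Finsupp ENNReal NNReal in
/-- (Gerard–Sibuya, Theorem A.) Any formal power series solution (without constant
term) of a Fuchsian system `x_i ∂y/∂x_i = f_i(x,y)`, `i = 1,…,m`, where the `f_i` are
germs of holomorphic maps `(ℂ^{m+n},0) → (ℂ^n,0)` (encoded as convergent power series
with zero constant term), converges in a neighbourhood of `0 ∈ ℂ^m`. -/
theorem gerard_sibuya_theorem_A (m n : ℕ)
    (F : Fin m → Fin n → MvPowerSeries (Fin m ⊕ Fin n) ℂ)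
    (hFconv : ∀ i k, ConvNearZero (F i k))
    (hF0 : ∀ i k, MvPowerSeries.constantCoeff (F i k) = 0)
    (φ : Fin n → MvPowerSeries (Fin m) ℂ)
    (hφ0 : ∀ k, MvPowerSeries.constantCoeff (φ k) = 0)
    (hsol : IsFormalSolution (fun _ => 1) F φ) :
    ∀ k, ConvNearZero (φ k) := by
  classical
  intro k
  rcases Nat.eq_zero_or_pos m with hm0 | hm
  · -- m = 0 : the index type is a subsingleton, summability is trivial
    subst hm0
    refine ⟨1, one_pos, ?_⟩
    haveI : Subsingleton (Fin 0 →₀ ℕ) := ⟨fun a b => Finsupp.ext fun i => i.elim0⟩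
    haveI : Finite (Fin 0 →₀ ℕ) := Finite.of_subsingleton
    exact Summable.of_finite
  have hn : 0 < n := k.pos
  -- common radius of convergence
  choose rs hrs hsum using hFconv
  set r : ℝ := min 1 (Finset.univ.inf' ⟨(⟨0,hm⟩, ⟨0,hn⟩), Finset.mem_univ _⟩
      (fun p : Fin m × Fin n => rs p.1 p.2)) with hrdef
  have hr0 : 0 < r := lt_min one_pos ((Finset.lt_inf'_iff _).mpr fun p _ => hrs p.1 p.2)
  have hr1 : r ≤ 1 := min_le_left _ _
  have hrle : ∀ i j, r ≤ rs i j := fun i j =>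
    (min_le_right _ _).trans (Finset.inf'_le _ (Finset.mem_univ (i, j)))
  have hsum' : ∀ i j, Summable (fun d : (Fin m ⊕ Fin n) →₀ ℕ =>
      ‖MvPowerSeries.coeff d (F i j)‖ * r ^ (deg d)) := by
    intro i j
    refine Summable.of_nonneg_of_le (fun d => by positivity) (fun d => ?_) (hsum i j)
    exact mul_le_mul_of_nonneg_left (pow_le_pow_left₀ hr0.le (hrle i j) _) (norm_nonneg _)
  set rnn : ℝ≥0 := r.toNNReal with hrnndef
  have hrnn : (rnn : ℝ) = r := Real.coe_toNNReal _ hr0.le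
  have hrnn0 : rnn ≠ 0 := by
    simp only [hrnndef, ne_eq, Real.toNNReal_eq_zero, not_le]
    exact hr0
  have hrnn1 : (rnn : ℝ≥0∞) ≤ 1 := by
    rw [show (1 : ℝ≥0∞) = ((1:ℝ≥0) : ℝ≥0∞) from rfl, ENNReal.coe_le_coe]
    have : (rnn : ℝ) ≤ 1 := by rw [hrnn]; exact hr1
    exact_mod_cast this
  -- constants
  set a : ℝ := ∑ i, ∑ j, ∑ j', ‖Amat F i j j'‖ with hadef
  set N0 : ℕ := ⌈2 * a * m⌉₊ + 1 with hN0def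
  have hN01 : 1 ≤ N0 := by omega
  have hN0a : ∀ N : ℕ, N0 + 1 ≤ N → 2 * a * m ≤ (N : ℝ) := by
    intro N hN
    calc 2 * a * m ≤ (⌈2 * a * m⌉₊ : ℝ) := Nat.le_ceil _
      _ ≤ (N : ℝ) := by
          have : ⌈2 * a * m⌉₊ ≤ N := by omega
          exact_mod_cast this
  -- the majorant sums of F
  set B : Fin m → Fin n → ℝ≥0∞ := fun i j => ∑' d : (Fin m ⊕ Fin n) →₀ ℕ,
    (‖MvPowerSeries.coeff d (F i j)‖₊ : ℝ≥0∞) * (rnn : ℝ≥0∞) ^ (deg d) with hBdef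
  have hBij : ∀ i j, B i j ≠ ⊤ := by
    intro i j
    have h1 : ∀ d : (Fin m ⊕ Fin n) →₀ ℕ,
        (‖MvPowerSeries.coeff d (F i j)‖₊ : ℝ≥0∞) * (rnn : ℝ≥0∞) ^ (deg d)
        = ((‖MvPowerSeries.coeff d (F i j)‖₊ * rnn ^ (deg d) : ℝ≥0) : ℝ≥0∞) := by
      intro d; push_cast; ring
    rw [hBdef]
    simp only [h1]
    rw [ENNReal.tsum_coe_ne_top_iff_summable]
    rw [← NNReal.summable_coe]
    have h2 : (fun d : (Fin m ⊕ Fin n) →₀ ℕ =>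
        ((‖MvPowerSeries.coeff d (F i j)‖₊ * rnn ^ (deg d) : ℝ≥0) : ℝ))
        = fun d => ‖MvPowerSeries.coeff d (F i j)‖ * r ^ (deg d) := by
      funext d; push_cast [hrnn]; rfl
    rw [h2]
    exact hsum' i j
  set Btot : ℝ≥0∞ := ∑ i, ∑ j, B i j with hBtotdef
  have hBtot : Btot ≠ ⊤ := by
    rw [hBtotdef]
    refine ne_of_lt (ENNReal.sum_lt_top.mpr fun i _ => ENNReal.sum_lt_top.mpr fun j _ => ?_)
    exact (hBij i j).lt_top
  -- the truncated sums of φ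
  set V : ℝ≥0∞ := ∑ j, wnK 1 N0 (maj (φ j)) with hVdef
  have hV : V ≠ ⊤ := by
    rw [hVdef]
    refine ne_of_lt (ENNReal.sum_lt_top.mpr fun j _ => ?_)
    exact (wnK_maj_ne_top (by norm_num) N0 (φ j)).lt_top
  -- choice of the small parameter ε
  obtain ⟨ε, hε0, hε1, hεtop, hC1, hC2⟩ : ∃ ε : ℝ≥0∞, ε ≠ 0 ∧ ε ≤ 1 ∧ ε ≠ ⊤ ∧
      ε * V ≤ 1 / 2 ∧ ε * (2 * m * Btot) ≤ (N0 + 1) * (rnn : ℝ≥0∞) / 2 := by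
    refine ⟨min 1 (min ((1/2) / (V + 1)) (((N0+1) * (rnn : ℝ≥0∞) / 2) / (2 * m * Btot + 1))),
      ?_, min_le_left _ _, ?_, ?_, ?_⟩
    · have c1 : (0:ℝ≥0∞) < (1/2) / (V + 1) :=
        ENNReal.div_pos (by norm_num) (by simp [hV])
      have hden : (2 * (m:ℝ≥0∞) * Btot + 1) ≠ ⊤ :=
        ENNReal.add_ne_top.mpr ⟨ENNReal.mul_ne_top
          (ENNReal.mul_ne_top (by simp) (by simp)) hBtot, by norm_num⟩
      have c2 : (0:ℝ≥0∞) < ((N0+1) * (rnn : ℝ≥0∞) / 2) / (2 * m * Btot + 1) := by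
        refine ENNReal.div_pos ?_ hden
        refine ENNReal.div_ne_zero.mpr ⟨?_, by norm_num⟩
        refine mul_ne_zero ?_ (by exact_mod_cast hrnn0)
        exact (lt_of_lt_of_le zero_lt_one le_add_self).ne'
      have : (0:ℝ≥0∞) < min 1 (min ((1/2) / (V + 1))
          (((N0+1) * (rnn : ℝ≥0∞) / 2) / (2 * m * Btot + 1))) :=
        lt_min one_pos (lt_min c1 c2)
      exact this.ne'
    · exact ne_top_of_le_ne_top (by norm_num) (min_le_left _ _)
    · calc (min 1 (min ((1/2) / (V + 1)) _)) * V
          ≤ ((1/2) / (V + 1)) * (V + 1) := by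
            refine mul_le_mul' ((min_le_right _ _).trans (min_le_left _ _)) (le_self_add)
        _ = 1/2 := ENNReal.div_mul_cancel (by simp) (by simp [hV])
    · calc (min 1 (min _ (((N0+1) * (rnn : ℝ≥0∞) / 2) / (2 * m * Btot + 1)))) * (2 * m * Btot)
          ≤ (((N0+1) * (rnn : ℝ≥0∞) / 2) / (2 * m * Btot + 1)) * (2 * m * Btot + 1) := by
            refine mul_le_mul' ((min_le_right _ _).trans (min_le_right _ _)) (le_self_add)
        _ = (N0+1) * (rnn : ℝ≥0∞) / 2 := ENNReal.div_mul_cancel (by simp) (by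
            refine ENNReal.add_ne_top.mpr ⟨?_, by norm_num⟩
            exact ENNReal.mul_ne_top (ENNReal.mul_ne_top (by simp) (by simp)) hBtot)
  -- weights
  set t : ℝ≥0∞ := (rnn : ℝ≥0∞) * ε ^ 2 with htdef
  set L : ℝ≥0∞ := (rnn : ℝ≥0∞) * ε with hLdef
  have ht1 : t ≤ 1 := by
    rw [htdef]
    exact mul_le_one' hrnn1 (pow_le_one' hε1 2)
  have htne : t ≠ ⊤ := ENNReal.mul_ne_top ENNReal.coe_ne_top
    (ENNReal.pow_ne_top hεtop)
  have ht0 : t ≠ 0 := by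
    rw [htdef]
    exact mul_ne_zero (by exact_mod_cast hrnn0) (pow_ne_zero 2 hε0)
  have hLne : L ≠ ⊤ := ENNReal.mul_ne_top ENNReal.coe_ne_top hεtop
  -- Vb facts
  have hVbφ : ∀ j, Vb 1 (maj (φ j)) := fun j => Vb_one_maj (hφ0 j)
  have hVba : ∀ s : Fin m ⊕ Fin n, Vb 1 (maj (Sum.elim MvPowerSeries.X φ s)) := by
    rintro (i | j)
    · exact Vb_one_maj_X i
    · exact hVbφ j
  -- the partial sums
  set P : ℕ → ℝ≥0∞ := fun K => ∑ j, wnK t K (maj (φ j)) with hPdef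
  have hPrep : ∀ K, P K = ∑' e : Fin m →₀ ℕ,
      (if deg e ≤ K then (∑ j, (‖MvPowerSeries.coeff e (φ j)‖₊ : ℝ≥0∞)) * t ^ deg e else 0) := by
    intro K
    simp only [hPdef]
    unfold wnK
    rw [← Summable.tsum_finsetSum (fun j _ => ENNReal.summable)]
    refine tsum_congr fun e => ?_
    by_cases hK : deg e ≤ K
    · simp only [if_pos hK, coeff_maj, Finset.sum_mul]
    · simp only [if_neg hK, Finset.sum_const_zero]
  -- base estimate
  have hbase : P N0 ≤ L / 2 := by
    have h1 : P N0 ≤ ∑ j, t * wnK 1 N0 (maj (φ j)) := by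
      rw [hPdef]
      exact Finset.sum_le_sum fun j _ => wnK_le_mul_of_vb1 ht1 (hVbφ j) N0
    have h2 : ∑ j, t * wnK 1 N0 (maj (φ j)) = t * V := by
      rw [hVdef, Finset.mul_sum]
    have h3 : t * V = L * (ε * V) := by rw [htdef, hLdef]; ring
    calc P N0 ≤ t * V := h1.trans_eq h2
      _ = L * (ε * V) := h3
      _ ≤ L * (1/2) := mul_le_mul_right hC1 _
      _ = L / 2 := by rw [ENNReal.div_eq_inv_mul, ENNReal.div_eq_inv_mul]; ring
  -- the modified majorant coefficients of F (resonant part removed)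
  set Ftil : Fin m → Fin n → ((Fin m ⊕ Fin n) →₀ ℕ) → ℝ≥0∞ := fun i j d =>
    if d = 0 ∨ d ∈ Res m n then 0 else (‖MvPowerSeries.coeff d (F i j)‖₊ : ℝ≥0∞) with hFtildef
  -- the per-coefficient key estimate, ℝ≥0∞ version
  have hkeyE : ∀ e : Fin m →₀ ℕ, N0 < deg e →
      (deg e : ℝ≥0∞) * (∑ j, (‖MvPowerSeries.coeff e (φ j)‖₊ : ℝ≥0∞))
      ≤ 2 * m * ∑ i, ∑ j, ∑' d : (Fin m ⊕ Fin n) →₀ ℕ,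
          Ftil i j d * (‖MvPowerSeries.coeff e
            (∏ s, (Sum.elim MvPowerSeries.X φ s) ^ (d s))‖₊ : ℝ≥0∞) := by
    intro e he
    have h1 : 1 ≤ deg e := by omega
    have hreal := key_arith m n hm (fun i => e i) (deg e)
      (fun i j j' => ‖Amat F i j j'‖) (fun i j j' => norm_nonneg _)
      (fun j => ‖MvPowerSeries.coeff e (φ j)‖) (fun j => norm_nonneg _)
      (fun i j => ∑ d ∈ IicBd m n e \ Res m n, ‖MvPowerSeries.coeff d (F i j)‖ *
        ‖MvPowerSeries.coeff e (∏ s, (Sum.elim MvPowerSeries.X φ s) ^ (d s))‖)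
      (fun i j => Finset.sum_nonneg fun d _ => mul_nonneg (norm_nonneg _) (norm_nonneg _))
      (deg_fintype e) (fun i j => key_norm F φ hsol i j e h1)
      (hN0a (deg e) (by omega))
    have hL : (deg e : ℝ≥0∞) * (∑ j, (‖MvPowerSeries.coeff e (φ j)‖₊ : ℝ≥0∞))
        = ENNReal.ofReal ((deg e : ℝ) * ∑ j, ‖MvPowerSeries.coeff e (φ j)‖) := by
      rw [ENNReal.ofReal_mul (by positivity), ENNReal.ofReal_natCast]
      congr 1
      rw [ENNReal.ofReal_sum_of_nonneg (fun j _ => norm_nonneg _)]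
      exact Finset.sum_congr rfl fun j _ => (ofReal_norm _).symm
    have hR : ENNReal.ofReal (2 * m * ∑ i, ∑ j,
        ∑ d ∈ IicBd m n e \ Res m n, ‖MvPowerSeries.coeff d (F i j)‖ *
          ‖MvPowerSeries.coeff e (∏ s, (Sum.elim MvPowerSeries.X φ s) ^ (d s))‖)
        = 2 * m * ∑ i, ∑ j, ∑ d ∈ IicBd m n e \ Res m n,
          (‖MvPowerSeries.coeff d (F i j)‖₊ : ℝ≥0∞) *
            (‖MvPowerSeries.coeff e (∏ s, (Sum.elim MvPowerSeries.X φ s) ^ (d s))‖₊ : ℝ≥0∞) := by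
      rw [ENNReal.ofReal_mul (by positivity)]
      congr 1
      · rw [show (2 : ℝ) * m = ((2 * m : ℕ) : ℝ) by push_cast; ring,
          ENNReal.ofReal_natCast]
        push_cast
        ring
      · rw [ENNReal.ofReal_sum_of_nonneg (fun i _ => Finset.sum_nonneg fun j _ =>
          Finset.sum_nonneg fun d _ => mul_nonneg (norm_nonneg _) (norm_nonneg _))]
        refine Finset.sum_congr rfl fun i _ => ?_
        rw [ENNReal.ofReal_sum_of_nonneg (fun j _ =>
          Finset.sum_nonneg fun d _ => mul_nonneg (norm_nonneg _) (norm_nonneg _))]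
        refine Finset.sum_congr rfl fun j _ => ?_
        rw [ENNReal.ofReal_sum_of_nonneg (fun d _ => mul_nonneg (norm_nonneg _) (norm_nonneg _))]
        refine Finset.sum_congr rfl fun d _ => ?_
        rw [ENNReal.ofReal_mul (norm_nonneg _)]
        exact congrArg₂ (· * ·) (ofReal_norm _) (ofReal_norm _)
    have hext : ∀ (i : Fin m) (j : Fin n),
        ∑ d ∈ IicBd m n e \ Res m n,
          (‖MvPowerSeries.coeff d (F i j)‖₊ : ℝ≥0∞) *
            (‖MvPowerSeries.coeff e (∏ s, (Sum.elim MvPowerSeries.X φ s) ^ (d s))‖₊ : ℝ≥0∞)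
        ≤ ∑' d : (Fin m ⊕ Fin n) →₀ ℕ, Ftil i j d *
            (‖MvPowerSeries.coeff e (∏ s, (Sum.elim MvPowerSeries.X φ s) ^ (d s))‖₊ : ℝ≥0∞) := by
      intro i j
      refine le_trans (Finset.sum_le_sum (f := fun d =>
          (‖MvPowerSeries.coeff d (F i j)‖₊ : ℝ≥0∞) *
            (‖MvPowerSeries.coeff e (∏ s, (Sum.elim MvPowerSeries.X φ s) ^ (d s))‖₊ : ℝ≥0∞))
        (g := fun d => Ftil i j d *
            (‖MvPowerSeries.coeff e (∏ s, (Sum.elim MvPowerSeries.X φ s) ^ (d s))‖₊ : ℝ≥0∞))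
        (fun d hd => ?_)) (ENNReal.sum_le_tsum _)
      rcases eq_or_ne d 0 with rfl | hd0
      · have : MvPowerSeries.coeff (0 : (Fin m ⊕ Fin n) →₀ ℕ) (F i j) = 0 := by
          rw [MvPowerSeries.coeff_zero_eq_constantCoeff]
          exact hF0 i j
        rw [this]
        simp
      · have hdres : d ∉ Res m n := (Finset.mem_sdiff.mp hd).2
        rw [hFtildef]
        simp only [if_neg (not_or.mpr ⟨hd0, hdres⟩)]
        exact le_rfl
    calc (deg e : ℝ≥0∞) * (∑ j, (‖MvPowerSeries.coeff e (φ j)‖₊ : ℝ≥0∞))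
        = ENNReal.ofReal ((deg e : ℝ) * ∑ j, ‖MvPowerSeries.coeff e (φ j)‖) := hL
      _ ≤ ENNReal.ofReal (2 * m * ∑ i, ∑ j,
          ∑ d ∈ IicBd m n e \ Res m n, ‖MvPowerSeries.coeff d (F i j)‖ *
            ‖MvPowerSeries.coeff e (∏ s, (Sum.elim MvPowerSeries.X φ s) ^ (d s))‖) :=
          ENNReal.ofReal_le_ofReal hreal
      _ = 2 * m * ∑ i, ∑ j, ∑ d ∈ IicBd m n e \ Res m n,
          (‖MvPowerSeries.coeff d (F i j)‖₊ : ℝ≥0∞) *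
            (‖MvPowerSeries.coeff e (∏ s, (Sum.elim MvPowerSeries.X φ s) ^ (d s))‖₊ : ℝ≥0∞) := hR
      _ ≤ _ := mul_le_mul_right (Finset.sum_le_sum fun i _ =>
          Finset.sum_le_sum fun j _ => hext i j) _
  -- the inductive step estimate for each d
  -- main induction
  have hmain : ∀ N, P (N0 + N) ≤ L := by
    intro N
    induction N with
    | zero => exact hbase.trans (ENNReal.half_le_self)
    | succ N ih =>
        set Nf : ℕ := N0 + N + 1 with hNfdef
        show P Nf ≤ L
        -- band decomposition
        set Qe : (Fin m →₀ ℕ) → ℝ≥0∞ := fun e =>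
          if N0 < deg e ∧ deg e ≤ Nf then
            (∑ j, (‖MvPowerSeries.coeff e (φ j)‖₊ : ℝ≥0∞)) * t ^ deg e else 0 with hQedef
        have hsplitP : P Nf = P N0 + ∑' e : Fin m →₀ ℕ, Qe e := by
          rw [hPrep Nf, hPrep N0, ← ENNReal.tsum_add]
          refine tsum_congr fun e => ?_
          simp only [hQedef]
          by_cases hc1 : deg e ≤ N0
          · rw [if_pos (le_trans hc1 (by omega)), if_pos hc1,
              if_neg (by omega : ¬(N0 < deg e ∧ deg e ≤ Nf)), add_zero]
          · by_cases hc2 : deg e ≤ Nf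
            · rw [if_pos hc2, if_neg hc1, if_pos ⟨by omega, hc2⟩, zero_add]
            · rw [if_neg hc2, if_neg (by omega : ¬ deg e ≤ N0),
                if_neg (by omega : ¬(N0 < deg e ∧ deg e ≤ Nf)), add_zero]
        -- per-d estimate
        have hstep7 : ∀ (i : Fin m) (j : Fin n) (d : (Fin m ⊕ Fin n) →₀ ℕ),
            Ftil i j d * wnK t Nf (maj (∏ s, (Sum.elim MvPowerSeries.X φ s) ^ (d s)))
            ≤ ((‖MvPowerSeries.coeff d (F i j)‖₊ : ℝ≥0∞) * (rnn : ℝ≥0∞) ^ (deg d)) * ε ^ 2 := by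
          intro i j d
          by_cases hd : d = 0 ∨ d ∈ Res m n
          · rw [hFtildef]
            simp only [if_pos hd, zero_mul]
            exact (zero_le)
          push_neg at hd
          obtain ⟨hd0, hdres⟩ := hd
          suffices hw : wnK t Nf (maj (∏ s, (Sum.elim MvPowerSeries.X φ s) ^ (d s)))
              ≤ (rnn : ℝ≥0∞) ^ (deg d) * ε ^ 2 by
            rw [hFtildef]
            simp only [if_neg (not_or.mpr ⟨hd0, hdres⟩)]
            calc (‖MvPowerSeries.coeff d (F i j)‖₊ : ℝ≥0∞) *
                wnK t Nf (maj (∏ s, (Sum.elim MvPowerSeries.X φ s) ^ (d s)))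
                ≤ (‖MvPowerSeries.coeff d (F i j)‖₊ : ℝ≥0∞) *
                  ((rnn : ℝ≥0∞) ^ (deg d) * ε ^ 2) := mul_le_mul_right hw _
              _ = _ := by ring
          have hw1 : wnK t Nf (maj (∏ s, (Sum.elim MvPowerSeries.X φ s) ^ (d s)))
              ≤ wnK t Nf (∏ s, (maj (Sum.elim MvPowerSeries.X φ s)) ^ (d s)) :=
            wnK_mono_coeff (maj_prodpow _ d)
          have hd1 : 1 ≤ deg d := by
            rcases Nat.eq_zero_or_pos (deg d) with h0 | h0
            · exact absurd (deg_eq_zero.mp h0) hd0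
            · exact h0
          rcases eq_or_lt_of_le hd1 with hdeg1 | hdeg2
          · -- deg d = 1
            obtain ⟨s0, rfl⟩ := eq_single_of_deg_eq_one hdeg1.symm
            rcases s0 with i' | j'
            · have hprod : (∏ s, (maj (Sum.elim MvPowerSeries.X φ s)) ^
                  ((Finsupp.single (Sum.inl i' : Fin m ⊕ Fin n) 1) s))
                  = maj (MvPowerSeries.X i') := by
                rw [prodpow_single (fun s => maj (Sum.elim MvPowerSeries.X φ s))
                  (Sum.inl i') 1, pow_one]
                rfl
              calc wnK t Nf (maj (∏ s, (Sum.elim MvPowerSeries.X φ s) ^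
                    ((Finsupp.single (Sum.inl i' : Fin m ⊕ Fin n) 1) s)))
                  ≤ wnK t Nf (∏ s, (maj (Sum.elim MvPowerSeries.X φ s)) ^
                    ((Finsupp.single (Sum.inl i' : Fin m ⊕ Fin n) 1) s)) := hw1
                _ = wnK t Nf (maj (MvPowerSeries.X i')) := by rw [hprod]
                _ ≤ t := wnK_maj_X i'
                _ = (rnn : ℝ≥0∞) ^ (deg (Finsupp.single (Sum.inl i' : Fin m ⊕ Fin n) 1)) * ε ^ 2 := by
                    rw [deg_single, pow_one, htdef]
            · refine absurd ?_ hdres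
              show Finsupp.single (Sum.inr j' : Fin m ⊕ Fin n) 1 ∈ Res m n
              exact Finset.mem_image_of_mem _ (Finset.mem_univ j')
          · -- 2 ≤ deg d
            set p : ℕ := ∑ i', d (Sum.inl i') with hpdef
            set q : ℕ := ∑ j', d (Sum.inr j') with hqdef
            have hpq : deg d = p + q := by
              rw [deg_fintype, Fintype.sum_sum_type]
            have hw2 := wnK_prodpow (t := t) (fun s => maj (Sum.elim MvPowerSeries.X φ s)) hVba d hd1 Nf
            have hw3 : (∏ s, (wnK t (Nf - (deg d - 1)) (maj (Sum.elim MvPowerSeries.X φ s))) ^ (d s))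
                ≤ t ^ p * L ^ q := by
              have hβ : ∀ s : Fin m ⊕ Fin n, wnK t (Nf - (deg d - 1)) (maj (Sum.elim MvPowerSeries.X φ s))
                  ≤ Sum.elim (fun _ : Fin m => t) (fun _ : Fin n => L) s := by
                rintro (i' | j')
                · exact wnK_maj_X i'
                · show wnK t (Nf - (deg d - 1)) (maj (φ j')) ≤ L
                  calc wnK t (Nf - (deg d - 1)) (maj (φ j'))
                      ≤ wnK t (N0 + N) (maj (φ j')) := wnK_mono_K (by omega) _
                    _ ≤ P (N0 + N) := Finset.single_le_sum
                        (f := fun j => wnK t (N0 + N) (maj (φ j)))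
                        (fun _ _ => (zero_le)) (Finset.mem_univ j')
                    _ ≤ L := ih
              calc (∏ s, (wnK t (Nf - (deg d - 1)) (maj (Sum.elim MvPowerSeries.X φ s))) ^ (d s))
                  ≤ ∏ s, (Sum.elim (fun _ : Fin m => t) (fun _ : Fin n => L) s) ^ (d s) :=
                    Finset.prod_le_prod' fun s _ => pow_le_pow_left' (hβ s) _
                _ = t ^ p * L ^ q := by
                    rw [Fintype.prod_sum_type]
                    simp only [Sum.elim_inl, Sum.elim_inr]
                    rw [Finset.prod_pow_eq_pow_sum, Finset.prod_pow_eq_pow_sum, hpdef, hqdef]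
            have hw5 : t ^ p * L ^ q ≤ (rnn : ℝ≥0∞) ^ (deg d) * ε ^ 2 := by
              rw [htdef, hLdef, hpq]
              have e1 : ((rnn : ℝ≥0∞) * ε ^ 2) ^ p * ((rnn : ℝ≥0∞) * ε) ^ q
                  = (rnn : ℝ≥0∞) ^ (p + q) * ε ^ (2 * p + q) := by
                rw [mul_pow, mul_pow, ← pow_mul, pow_add, pow_add]
                ring
              rw [e1]
              refine mul_le_mul_right ?_ _
              have e2 : ε ^ (2 * p + q) = ε ^ 2 * ε ^ (2 * p + q - 2) := by
                rw [← pow_add]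
                congr 1
                omega
              rw [e2]
              calc ε ^ 2 * ε ^ (2 * p + q - 2) ≤ ε ^ 2 * 1 :=
                  mul_le_mul_right (pow_le_one' hε1 _) _
                _ = ε ^ 2 := mul_one _
            exact le_trans hw1 (le_trans hw2 (le_trans hw3 hw5))
        -- summing the band
        have hband : ((N0 : ℝ≥0∞) + 1) * (∑' e : Fin m →₀ ℕ, Qe e)
            ≤ ((N0 : ℝ≥0∞) + 1) * (L / 2) := by
          have hb2 : ∀ e : Fin m →₀ ℕ, ((N0 : ℝ≥0∞) + 1) * Qe e ≤
              (if deg e ≤ Nf then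
                (2 * m * ∑ i, ∑ j, ∑' d : (Fin m ⊕ Fin n) →₀ ℕ, Ftil i j d *
                  (‖MvPowerSeries.coeff e
                    (∏ s, (Sum.elim MvPowerSeries.X φ s) ^ (d s))‖₊ : ℝ≥0∞)) * t ^ deg e
               else 0) := by
            intro e
            simp only [hQedef]
            by_cases hcond : N0 < deg e ∧ deg e ≤ Nf
            · rw [if_pos hcond, if_pos hcond.2, ← mul_assoc]
              refine mul_le_mul_left ?_ _
              calc ((N0 : ℝ≥0∞) + 1) * (∑ j, (‖MvPowerSeries.coeff e (φ j)‖₊ : ℝ≥0∞))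
                  ≤ (deg e : ℝ≥0∞) * (∑ j, (‖MvPowerSeries.coeff e (φ j)‖₊ : ℝ≥0∞)) := by
                    refine mul_le_mul_left ?_ _
                    have : ((N0 + 1 : ℕ) : ℝ≥0∞) ≤ ((deg e : ℕ) : ℝ≥0∞) :=
                      Nat.cast_le.mpr (Nat.succ_le_of_lt hcond.1)
                    simpa using this
                _ ≤ _ := hkeyE e hcond.1
            · rw [if_neg hcond, mul_zero]
              exact (zero_le)
          have hb3 : (∑' e : Fin m →₀ ℕ, (if deg e ≤ Nf then
                (2 * m * ∑ i, ∑ j, ∑' d : (Fin m ⊕ Fin n) →₀ ℕ, Ftil i j d *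
                  (‖MvPowerSeries.coeff e
                    (∏ s, (Sum.elim MvPowerSeries.X φ s) ^ (d s))‖₊ : ℝ≥0∞)) * t ^ deg e
               else 0))
              = 2 * m * ∑ i, ∑ j, ∑' d : (Fin m ⊕ Fin n) →₀ ℕ, Ftil i j d *
                  wnK t Nf (maj (∏ s, (Sum.elim MvPowerSeries.X φ s) ^ (d s))) := by
            have step1 : ∀ e : Fin m →₀ ℕ, (if deg e ≤ Nf then
                (2 * m * ∑ i, ∑ j, ∑' d : (Fin m ⊕ Fin n) →₀ ℕ, Ftil i j d *
                  (‖MvPowerSeries.coeff e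
                    (∏ s, (Sum.elim MvPowerSeries.X φ s) ^ (d s))‖₊ : ℝ≥0∞)) * t ^ deg e
               else 0)
                = 2 * m * ∑ i, ∑ j, ∑' d : (Fin m ⊕ Fin n) →₀ ℕ, Ftil i j d *
                  (if deg e ≤ Nf then
                    (‖MvPowerSeries.coeff e
                      (∏ s, (Sum.elim MvPowerSeries.X φ s) ^ (d s))‖₊ : ℝ≥0∞) * t ^ deg e
                   else 0) := by
              intro e
              by_cases hc : deg e ≤ Nf
              · rw [if_pos hc, mul_assoc]
                congr 1
                rw [Finset.sum_mul]
                refine Finset.sum_congr rfl fun i _ => ?_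
                rw [Finset.sum_mul]
                refine Finset.sum_congr rfl fun j _ => ?_
                rw [← ENNReal.tsum_mul_right]
                refine tsum_congr fun d => ?_
                rw [if_pos hc, mul_assoc]
              · rw [if_neg hc]
                have hz : ∀ (i : Fin m) (j : Fin n),
                    (∑' d : (Fin m ⊕ Fin n) →₀ ℕ, Ftil i j d *
                      (if deg e ≤ Nf then
                        (‖MvPowerSeries.coeff e
                          (∏ s, (Sum.elim MvPowerSeries.X φ s) ^ (d s))‖₊ : ℝ≥0∞) * t ^ deg e
                       else 0)) = 0 := by
                  intro i j
                  simp [if_neg hc]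
                rw [Finset.sum_congr rfl fun i _ => Finset.sum_congr rfl fun j _ => hz i j]
                simp
            rw [tsum_congr step1, ENNReal.tsum_mul_left]
            congr 1
            rw [Summable.tsum_finsetSum (fun i _ => ENNReal.summable)]
            refine Finset.sum_congr rfl fun i _ => ?_
            rw [Summable.tsum_finsetSum (fun j _ => ENNReal.summable)]
            refine Finset.sum_congr rfl fun j _ => ?_
            rw [ENNReal.tsum_comm]
            refine tsum_congr fun d => ?_
            rw [ENNReal.tsum_mul_left]
            congr 1
          calc ((N0 : ℝ≥0∞) + 1) * (∑' e : Fin m →₀ ℕ, Qe e)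
              = ∑' e : Fin m →₀ ℕ, ((N0 : ℝ≥0∞) + 1) * Qe e := ENNReal.tsum_mul_left.symm
            _ ≤ _ := ENNReal.tsum_le_tsum hb2
            _ = 2 * m * ∑ i, ∑ j, ∑' d : (Fin m ⊕ Fin n) →₀ ℕ, Ftil i j d *
                  wnK t Nf (maj (∏ s, (Sum.elim MvPowerSeries.X φ s) ^ (d s))) := hb3
            _ ≤ 2 * m * ∑ i, ∑ j, B i j * ε ^ 2 := by
                refine mul_le_mul_right (Finset.sum_le_sum fun i _ =>
                  Finset.sum_le_sum fun j _ => ?_) _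
                calc (∑' d : (Fin m ⊕ Fin n) →₀ ℕ, Ftil i j d *
                      wnK t Nf (maj (∏ s, (Sum.elim MvPowerSeries.X φ s) ^ (d s))))
                    ≤ ∑' d : (Fin m ⊕ Fin n) →₀ ℕ,
                      ((‖MvPowerSeries.coeff d (F i j)‖₊ : ℝ≥0∞) * (rnn : ℝ≥0∞) ^ (deg d)) * ε ^ 2 :=
                      ENNReal.tsum_le_tsum (hstep7 i j)
                  _ = B i j * ε ^ 2 := by
                      rw [ENNReal.tsum_mul_right, hBdef]
            _ = ε * (ε * (2 * m * Btot)) := by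
                have h1 : ∀ i : Fin m, (∑ j, B i j * ε ^ 2) = (∑ j, B i j) * ε ^ 2 :=
                  fun i => (Finset.sum_mul _ _ _).symm
                rw [Finset.sum_congr rfl fun i _ => h1 i, ← Finset.sum_mul, ← hBtotdef]
                ring
            _ ≤ ε * ((N0 + 1) * (rnn : ℝ≥0∞) / 2) := mul_le_mul_right hC2 _
            _ = ((N0 : ℝ≥0∞) + 1) * (L / 2) := by
                rw [hLdef, ENNReal.div_eq_inv_mul, ENNReal.div_eq_inv_mul]
                ring
        have hN0ne : ((N0 : ℝ≥0∞) + 1) ≠ 0 := (lt_of_lt_of_le zero_lt_one le_add_self).ne'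
        have hN0top : ((N0 : ℝ≥0∞) + 1) ≠ ⊤ := by simp
        have hQle : (∑' e : Fin m →₀ ℕ, Qe e) ≤ L / 2 :=
          (ENNReal.mul_le_mul_iff_right hN0ne hN0top).mp hband
        calc P Nf = P N0 + ∑' e : Fin m →₀ ℕ, Qe e := hsplitP
          _ ≤ L / 2 + L / 2 := add_le_add hbase hQle
          _ = L := ENNReal.add_halves L
  -- conclusion
  have hPall : ∀ K, P K ≤ L := by
    intro K
    rcases le_total K N0 with h | h
    · calc P K ≤ P N0 := Finset.sum_le_sum fun j _ => wnK_mono_K h _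
        _ ≤ L := by simpa using hmain 0
    · have : K = N0 + (K - N0) := by omega
      rw [this]
      exact hmain _
  have htsum : ∑' e : Fin m →₀ ℕ,
      (‖MvPowerSeries.coeff e (φ k)‖₊ : ℝ≥0∞) * t ^ deg e ≤ L := by
    rw [ENNReal.tsum_eq_iSup_sum]
    refine iSup_le fun S => ?_
    set K : ℕ := S.sup deg with hKdef
    calc ∑ e ∈ S, (‖MvPowerSeries.coeff e (φ k)‖₊ : ℝ≥0∞) * t ^ deg e
        = ∑ e ∈ S, (if deg e ≤ K then MvPowerSeries.coeff e (maj (φ k)) * t ^ deg e else 0) := by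
          refine Finset.sum_congr rfl fun e he => ?_
          rw [if_pos (Finset.le_sup (f := deg) he), coeff_maj]
      _ ≤ wnK t K (maj (φ k)) := ENNReal.sum_le_tsum S
      _ ≤ P K := Finset.single_le_sum (f := fun j => wnK t K (maj (φ j)))
          (fun _ _ => (zero_le)) (Finset.mem_univ k)
      _ ≤ L := hPall K
  -- produce the radius
  refine ⟨(t.toNNReal : ℝ), ?_, ?_⟩
  · have : 0 < t.toNNReal := ENNReal.toNNReal_pos ht0 htne
    exact_mod_cast this
  · set g : (Fin m →₀ ℕ) → ℝ≥0 := fun e => ‖MvPowerSeries.coeff e (φ k)‖₊ *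
      t.toNNReal ^ (deg e) with hgdef
    have hfun : (fun e : Fin m →₀ ℕ => ‖MvPowerSeries.coeff e (φ k)‖ *
        (t.toNNReal : ℝ) ^ (e.sum fun _ k => k)) = fun e => ((g e : ℝ)) := by
      funext e
      rw [hgdef]
      push_cast
      rfl
    rw [hfun, NNReal.summable_coe]
    rw [← ENNReal.tsum_coe_ne_top_iff_summable]
    refine ne_of_lt (lt_of_le_of_lt ?_ hLne.lt_top)
    have hco : ∀ e : Fin m →₀ ℕ, ((g e : ℝ≥0∞))
        = (‖MvPowerSeries.coeff e (φ k)‖₊ : ℝ≥0∞) * t ^ deg e := by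
      intro e
      rw [hgdef]
      push_cast
      rw [ENNReal.coe_toNNReal htne]
    calc ∑' e, ((g e) : ℝ≥0∞) = ∑' e : Fin m →₀ ℕ,
        (‖MvPowerSeries.coeff e (φ k)‖₊ : ℝ≥0∞) * t ^ deg e := tsum_congr hco
      _ ≤ L := htsum


end
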